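/- In Heisenberg coordinates, for two points q = [x, 0] and r = [y e^{iθ}, 0] with x, y > 0 and 0 < θ < 2π, the Cartan invariant of (q, r, 0), where 0 = [0,0], equals arg(1 − sin(2t) e^{−iθ}) where t = arg(x + i y) ∈ (0, π/2); moreover 0 < 𝔸(q, r, 0) ≤ (π − θ)/2 when 0 < θ < π, with the maximum attained at x = y. -/

import Mathlib

open Matrix Complex

noncomputable section

abbrev C3 := Fin 3 → ℂ

/-- Hermitian form ⟨X,Y⟩ = Yᴴ J X. -/
def herm (J : Matrix (Fin 3) (Fin 3) ℂ) (X Y : C3) : ℂ :=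
  star Y ⬝ᵥ J.mulVec X

/-- The Hermitian matrix of the Siegel model. -/
def HS : Matrix (Fin 3) (Fin 3) ℂ := !![0,0,1;0,2,0;1,0,0]

def cartan (J : Matrix (Fin 3) (Fin 3) ℂ) (p q r : C3) : ℝ :=
  (-(herm J p q * herm J q r * herm J r p)).arg

set_option maxHeartbeats 1000000 in
/-- For q = [x,0], r = [y e^{iθ},0] (x, y > 0, 0 < θ < 2π) and o = [0,0], the Cartan
invariant 𝔸(q,r,o) equals arg(1 − sin(2t) e^{−iθ}) where t = arg(x+iy) ∈ (0,π/2); moreover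
for 0 < θ < π one has 0 < 𝔸(q,r,o) ≤ (π−θ)/2, with the maximum attained at x = y. -/
theorem stmt17 (θ x y : ℝ) (hx : 0 < x) (hy : 0 < y) (hθ0 : 0 < θ) (hθ1 : θ < 2 * Real.pi)
    (q r o : C3)
    (hq : q = ![-(x : ℂ)^2, (x : ℂ), 1])
    (hr : r = ![-(y : ℂ)^2, (y : ℂ) * Complex.exp (θ * Complex.I), 1])
    (ho : o = ![0, 0, 1])
    (t : ℝ) (ht : t = Complex.arg (x + y * Complex.I)) :
    cartan HS q r o = Complex.arg (1 - (Real.sin (2 * t) : ℂ) * Complex.exp (-θ * Complex.I))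
      ∧ (θ < Real.pi →
          (0 < cartan HS q r o ∧ cartan HS q r o ≤ (Real.pi - θ) / 2 ∧
            (x = y → cartan HS q r o = (Real.pi - θ) / 2))) := by
  subst hq hr ho
  have hρ : (0:ℝ) < x^2 + y^2 := by positivity
  have hzne : ((x:ℂ) + y*Complex.I) ≠ 0 := by
    intro h
    have := congrArg Complex.re h
    simp at this
    linarith
  have habs2 : (‖(x:ℂ) + y*Complex.I‖)^2 = x^2 + y^2 := by
    rw [Complex.sq_norm, Complex.normSq_apply]; simp; ring
  have habs : (0:ℝ) < ‖(x:ℂ) + y*Complex.I‖ := norm_pos_iff.mpr hzne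
  have hs : Real.sin (2*t) = 2*x*y/(x^2+y^2) := by
    rw [ht, Real.sin_two_mul, Complex.sin_arg, Complex.cos_arg hzne]
    simp only [Complex.add_re, Complex.ofReal_re, Complex.mul_re, Complex.I_re, Complex.I_im,
      Complex.ofReal_im, Complex.add_im, Complex.mul_im]
    rw [← habs2]
    field_simp
    ring
  have hsC : ((Real.sin (2*t) : ℝ) : ℂ) = 2*x*y/((x:ℂ)^2+y^2) := by
    rw [hs]; push_cast; ring
  have hρC : ((x:ℂ)^2 + y^2) ≠ 0 := by
    exact_mod_cast ne_of_gt hρ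
  have key : -(herm HS ![-(x : ℂ)^2, (x : ℂ), 1] ![-(y : ℂ)^2, (y : ℂ) * Complex.exp (θ * Complex.I), 1]
      * herm HS ![-(y : ℂ)^2, (y : ℂ) * Complex.exp (θ * Complex.I), 1] ![0,0,1]
      * herm HS ![0,0,1] ![-(x : ℂ)^2, (x : ℂ), 1])
      = ((x^2*y^2*(x^2+y^2) : ℝ) : ℂ)
        * (1 - (Real.sin (2 * t) : ℂ) * Complex.exp (-θ * Complex.I)) := by
    rw [show (2:ℝ)*t = 2*t by ring, hsC]
    simp [herm, HS, Matrix.mulVec, dotProduct, Fin.sum_univ_three, Matrix.vecHead, Matrix.vecTail,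
      ← Complex.exp_conj, Complex.conj_ofReal]
    push_cast
    field_simp
    ring
  have hcar : cartan HS ![-(x : ℂ)^2, (x : ℂ), 1]
      ![-(y : ℂ)^2, (y : ℂ) * Complex.exp (θ * Complex.I), 1] ![0,0,1]
      = Complex.arg (1 - (Real.sin (2 * t) : ℂ) * Complex.exp (-θ * Complex.I)) := by
    rw [cartan, key, Complex.arg_real_mul _ (by positivity)]
  refine ⟨hcar, fun hθπ => ?_⟩
  set s : ℝ := Real.sin (2*t) with hsdef
  have hs0 : 0 < s := by rw [hs]; positivity
  have hs1 : s ≤ 1 := by rw [hs, div_le_one hρ]; nlinarith [sq_nonneg (x - y)]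
  have hsθ : 0 < Real.sin θ := Real.sin_pos_of_pos_of_lt_pi hθ0 hθπ
  have hsθ2 : 0 < Real.sin (θ/2) :=
    Real.sin_pos_of_pos_of_lt_pi (by linarith) (by linarith [Real.pi_pos])
  have hcθ2 : 0 < Real.cos (θ/2) :=
    Real.cos_pos_of_mem_Ioo ⟨by linarith [Real.pi_pos], by linarith⟩
  have hc1 : Real.cos θ < 1 := by
    have h1 := Real.cos_two_mul (θ/2)
    have h2 := Real.sin_sq_add_cos_sq (θ/2)
    have h3 : Real.cos (2*(θ/2)) = Real.cos θ := by congr 1; ring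
    nlinarith
  have hconeg := Real.neg_one_le_cos θ
  have hrepos : (0:ℝ) < 1 - s * Real.cos θ := by
    nlinarith [mul_pos hs0 (sub_pos.mpr hc1)]
  set z : ℂ := 1 - (s : ℂ) * Complex.exp (-θ * Complex.I) with hzdef
  have hexp : Complex.exp (-(θ:ℂ) * Complex.I)
      = ((Real.cos θ : ℝ) : ℂ) - ((Real.sin θ : ℝ) : ℂ) * Complex.I := by
    rw [show (-(θ:ℂ) * Complex.I) = ((-θ : ℝ) : ℂ) * Complex.I by push_cast; ring,
      Complex.exp_mul_I, ← Complex.ofReal_cos, ← Complex.ofReal_sin, Real.cos_neg, Real.sin_neg]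
    push_cast
    ring
  have hre : z.re = 1 - s * Real.cos θ := by
    rw [hzdef, hexp]
    simp [Complex.sub_re, Complex.mul_re, Complex.sub_im, Complex.mul_im, Complex.cos_ofReal_re, Complex.sin_ofReal_re]
  have him : z.im = s * Real.sin θ := by
    rw [hzdef, hexp]
    simp [Complex.sub_re, Complex.mul_re, Complex.sub_im, Complex.mul_im, Complex.cos_ofReal_re, Complex.sin_ofReal_re]
  have himpos : 0 < z.im := by rw [him]; positivity
  have hargpos : 0 < z.arg := by
    rcases lt_or_eq_of_le (Complex.arg_nonneg_iff.mpr himpos.le) with h | h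
    · exact h
    · exfalso
      have := Complex.arg_eq_zero_iff.mp h.symm
      rw [him] at this
      nlinarith [this.2]
  have harglt : z.arg < Real.pi / 2 :=
    Complex.arg_lt_pi_div_two_iff.mpr (Or.inl (by rw [hre]; exact hrepos))
  have harg_eq : z.arg = Real.arctan (s * Real.sin θ / (1 - s * Real.cos θ)) := by
    have h := Real.arctan_tan (x := z.arg) (by linarith [Real.pi_pos]) harglt
    rw [Complex.tan_arg, hre, him] at h
    exact h.symm
  have harcend : Real.arctan (Real.sin θ / (1 - Real.cos θ)) = (Real.pi - θ) / 2 := by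
    rw [← Real.arctan_tan (x := (Real.pi - θ)/2) (by linarith) (by linarith)]
    congr 1
    rw [Real.tan_eq_sin_div_cos]
    have h1 : Real.sin ((Real.pi - θ)/2) = Real.cos (θ/2) := by
      rw [show (Real.pi - θ)/2 = Real.pi/2 - θ/2 by ring, Real.sin_pi_div_two_sub]
    have h2 : Real.cos ((Real.pi - θ)/2) = Real.sin (θ/2) := by
      rw [show (Real.pi - θ)/2 = Real.pi/2 - θ/2 by ring, Real.cos_pi_div_two_sub]
    have h3 : Real.sin θ = 2 * Real.sin (θ/2) * Real.cos (θ/2) := by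
      rw [show θ = 2*(θ/2) by ring, Real.sin_two_mul]; ring_nf
    have h4 : 1 - Real.cos θ = 2 * Real.sin (θ/2)^2 := by
      have := Real.cos_two_mul (θ/2)
      have h2' := Real.sin_sq_add_cos_sq (θ/2)
      have h3' : Real.cos (2*(θ/2)) = Real.cos θ := by congr 1; ring
      nlinarith
    rw [h1, h2, h3, h4]
    field_simp
  rw [hcar]
  refine ⟨hargpos, ?_, ?_⟩
  · rw [harg_eq, ← harcend]
    apply Real.arctan_strictMono.monotone
    rw [div_le_div_iff₀ hrepos (by linarith)]
    nlinarith [mul_nonneg (sub_nonneg.mpr hs1) hsθ.le]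
  · intro hxy
    have hs1' : s = 1 := by
      rw [hs, hxy]
      field_simp
      ring
    rw [harg_eq, hs1', one_mul, one_mul, harcend]
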